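/- For every n-expression u of length ℓ, area(u) ≤ (n-1)ℓ, and for a normal expression u = s_{1,f(1)} ... s_{n,f(n)} the n-th strand in the braid diagram of u crosses in front only during the final block s_{n,f(n)}; consequently any two strands cross at most once in the diagram of a normal expression. -/

import Mathlib

open scoped Classical

noncomputable section

/-- adjacent transposition `s i = (i, i+1)` acting on ℕ (1-indexed positions) -/
def s (i : ℕ) : Equiv.Perm ℕ := Equiv.swap i (i + 1)

/-- permutation represented by a word; letters are applied left to right
(`wperm (u ++ v) = wperm v * wperm u`, i.e. `u` first, then `v`). -/
def wperm (w : List ℕ) : Equiv.Perm ℕ := ((w.map s).reverse).prod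

/-- `w` is an `n`-expression: a word in the letters `s 1, ..., s (n-1)` -/
def IsExpr (n : ℕ) (w : List ℕ) : Prop := ∀ i ∈ w, 1 ≤ i ∧ i + 1 ≤ n

/-- set of inversions of a permutation of `{1,...,n}` -/
def invSet (n : ℕ) (π : Equiv.Perm ℕ) : Finset (ℕ × ℕ) :=
  (Finset.Icc 1 n ×ˢ Finset.Icc 1 n).filter (fun pq => pq.1 < pq.2 ∧ π pq.2 < π pq.1)

/-- a reduced `n`-expression: its length equals the inversion number of the
permutation it represents -/
def ReducedExpr (n : ℕ) (w : List ℕ) : Prop :=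
  IsExpr n w ∧ w.length = (invSet n (wperm w)).card

/-- one application of a braid relation `s i s j s i = s j s i s j`, `|i-j| = 1` -/
inductive StepI : List ℕ → List ℕ → Prop
  | mk (a b : List ℕ) (i j : ℕ) (h : i + 1 = j ∨ j + 1 = i) :
      StepI (a ++ i :: j :: i :: b) (a ++ j :: i :: j :: b)

/-- one application of a commutation relation `s i s j = s j s i`, `|i-j| ≥ 2` -/
inductive StepII : List ℕ → List ℕ → Prop
  | mk (a b : List ℕ) (i j : ℕ) (h : i + 2 ≤ j ∨ j + 2 ≤ i) :
      StepII (a ++ i :: j :: b) (a ++ j :: i :: b)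

def BraidStep (u v : List ℕ) : Prop := StepI u v ∨ StepII u v

/-- `c` is a derivation from `u` to `v` by braid relations -/
def IsDeriv (u v : List ℕ) (c : List (List ℕ)) : Prop :=
  c.Chain' BraidStep ∧ c.head? = some u ∧ c.getLast? = some v

/-- combinatorial distance: minimal number of braid relations transforming `u` into `v` -/
def dist (u v : List ℕ) : ℕ :=
  sInf {k | ∃ c, IsDeriv u v c ∧ c.length = k + 1}

/-- the word `s_{j,i} = s_{j-1} s_{j-2} ... s_i` (empty if `j ≤ i`) -/
def sji (j i : ℕ) : List ℕ := (List.range (j - i)).map (fun k => j - 1 - k)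

/-- the normal word `s_{1,f(1)} s_{2,f(2)} ... s_{n,f(n)}` -/
def normalWord (n : ℕ) (f : ℕ → ℕ) : List ℕ :=
  ((List.range n).map (fun k => sji (k + 1) (f (k + 1)))).flatten

/-- `f : {1,...,n} → {1,...,n}` with `1 ≤ f i ≤ i` for all `i` -/
def IsNormalFun (n : ℕ) (f : ℕ → ℕ) : Prop := ∀ i ∈ Finset.Icc 1 n, 1 ≤ f i ∧ f i ≤ i

/-- names of the successive crossings: the name of a letter is the pair of starting
positions of the two strands crossing there -/
def namesAux : Equiv.Perm ℕ → List ℕ → List (Finset ℕ)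
  | _, [] => []
  | π, i :: rest => ({π⁻¹ i, π⁻¹ (i + 1)} : Finset ℕ) :: namesAux (s i * π) rest

/-- the name sequence `S(w)` of a word -/
def names (w : List ℕ) : List (Finset ℕ) := namesAux 1 w

/-- two entries occur in the same relative order in `S` and `S'` -/
def sameOrder (S S' : List (Finset ℕ)) (a b : Finset ℕ) : Prop :=
  (S.idxOf a < S.idxOf b) ↔ (S'.idxOf a < S'.idxOf b)

/-- `I₃(S,S')`: number of triples `{p,q,r} ⊆ {1,...,n}` such that the relative order of
the three pairs `{p,q}, {p,r}, {q,r}` is not the same in `S` and `S'` -/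
def I3 (n : ℕ) (S S' : List (Finset ℕ)) : ℕ :=
  (((Finset.Icc 1 n).powersetCard 3).filter (fun t =>
    ¬ ∀ a ∈ t.powersetCard 2, ∀ b ∈ t.powersetCard 2, sameOrder S S' a b)).card

/-- `I₂,₂(S,S')`: number of unordered pairs of disjoint pairs in `{1,...,n}` whose
relative order is not the same in `S` and `S'` -/
def I22 (n : ℕ) (S S' : List (Finset ℕ)) : ℕ :=
  ((((Finset.Icc 1 n).powersetCard 2).powersetCard 2).filter (fun P =>
    (∀ a ∈ P, ∀ b ∈ P, a ≠ b → Disjoint a b) ∧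
    ¬ ∀ a ∈ P, ∀ b ∈ P, sameOrder S S' a b)).card

/-- total number of unordered pairs of entries whose relative order differs -/
def InvCount (S S' : List (Finset ℕ)) : ℕ :=
  ((S.toFinset.powersetCard 2).filter (fun P =>
    ¬ ∀ a ∈ P, ∀ b ∈ P, sameOrder S S' a b)).card

/-- number of type I steps in a derivation -/
def countStepsI (c : List (List ℕ)) : ℕ :=
  ((Finset.range (c.length - 1)).filter (fun k => StepI (c.getD k []) (c.getD (k + 1) []))).card

/-- number of type II steps in a derivation -/
def countStepsII (c : List (List ℕ)) : ℕ :=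
  ((Finset.range (c.length - 1)).filter (fun k => StepII (c.getD k []) (c.getD (k + 1) []))).card

/-- position of the strand starting at position `p` after the first `k` letters of `w` -/
def strandPos (w : List ℕ) (p k : ℕ) : ℕ := wperm (w.take k) p

/-- number of unit squares to the right of the `n`-th strand in the braid diagram of `w`,
drawn on an `(n-1) × length w` grid -/
def area (n : ℕ) (w : List ℕ) : ℕ :=
  ((List.range w.length).map (fun k => n - max (strandPos w n k) (strandPos w n (k + 1)))).sum

/-- `u_n = s_{1,1} s_{2,1} ... s_{n,1}` -/
def uWord (n : ℕ) : List ℕ := ((List.range n).map (fun k => sji (k + 1) 1)).flatten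

/-- `v_n = s_{n,1} s_{n,2} ... s_{n,n-1}` -/
def vWord (n : ℕ) : List ℕ := ((List.range (n - 1)).map (fun k => sji n (k + 1))).flatten


/-! ### Auxiliary lemmas -/

lemma wperm_nil : wperm [] = 1 := rfl

lemma wperm_cons (i : ℕ) (w : List ℕ) : wperm (i :: w) = wperm w * s i := by
  simp [wperm]

lemma wperm_apply_cons (i : ℕ) (w : List ℕ) (p : ℕ) :
    wperm (i :: w) p = wperm w (s i p) := by
  rw [wperm_cons]; rfl

lemma s_fix {i a : ℕ} (h1 : a ≠ i) (h2 : a ≠ i + 1) : s i a = a :=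
  Equiv.swap_apply_of_ne_of_ne h1 h2

lemma wperm_fix {w : List ℕ} {m : ℕ} (h : ∀ a ∈ w, a ≠ m ∧ a + 1 ≠ m) :
    wperm w m = m := by
  induction w with
  | nil => rfl
  | cons i w ih =>
    have hi := h i (by simp)
    rw [wperm_apply_cons, s_fix (fun e => hi.1 e.symm) (fun e => hi.2 e.symm)]
    exact ih (fun a ha => h a (by simp [ha]))

lemma mem_sji {a j i : ℕ} (h : a ∈ sji j i) : a < j := by
  simp only [sji, List.mem_map, List.mem_range] at h
  obtain ⟨k, hk, rfl⟩ := h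
  omega

lemma length_sji (j i : ℕ) : (sji j i).length = j - i := by
  simp [sji]

lemma sji_nil {j i : ℕ} (h : j ≤ i) : sji j i = [] := by
  have : j - i = 0 := by omega
  simp [sji, this]

lemma sji_cons {j i : ℕ} (h : i < j) : sji j i = (j - 1) :: sji (j - 1) i := by
  unfold sji
  have h1 : j - i = (j - 1 - i) + 1 := by omega
  rw [h1, List.range_succ_eq_map, List.map_cons, List.map_map]
  refine congrArg₂ _ rfl (List.map_congr_left ?_)
  intro a ha
  simp only [Function.comp]
  omega

lemma sji_nodup (j i : ℕ) : (sji j i).Nodup := by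
  unfold sji
  refine List.Nodup.map_on ?_ List.nodup_range
  intro x hx y hy hxy
  simp only [List.mem_range] at hx hy
  omega

lemma namesAux_cons (π : Equiv.Perm ℕ) (i : ℕ) (w : List ℕ) :
    namesAux π (i :: w) = ({π⁻¹ i, π⁻¹ (i + 1)} : Finset ℕ) :: namesAux (s i * π) w := rfl

lemma namesAux_append (π : Equiv.Perm ℕ) (u v : List ℕ) :
    namesAux π (u ++ v) = namesAux π u ++ namesAux (wperm u * π) v := by
  induction u generalizing π with
  | nil => simp [namesAux, wperm_nil]
  | cons i u ih =>
    simp only [List.cons_append, namesAux_cons, ih (s i * π), wperm_cons, mul_assoc]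

lemma mul_perm_inv_apply (m : ℕ) (π : Equiv.Perm ℕ) (x : ℕ) :
    (s m * π)⁻¹ x = π⁻¹ (s m x) := by
  simp [s, mul_inv_rev, Equiv.Perm.mul_apply, Equiv.swap_inv]

lemma namesAux_sji (j : ℕ) : ∀ (i : ℕ) (π : Equiv.Perm ℕ),
    namesAux π (sji j i) = (sji j i).map (fun a => ({π⁻¹ a, π⁻¹ j} : Finset ℕ)) := by
  induction j using Nat.strong_induction_on with
  | _ j ih =>
    intro i π
    by_cases h : i < j
    · rw [sji_cons h, namesAux_cons, List.map_cons]
      have hj : j - 1 + 1 = j := by omega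
      rw [hj, ih (j - 1) (by omega) i (s (j - 1) * π)]
      congr 1
      refine List.map_congr_left ?_
      intro a ha
      have haj := mem_sji ha
      rw [mul_perm_inv_apply, mul_perm_inv_apply,
        s_fix (by omega : a ≠ j - 1) (by omega : a ≠ j - 1 + 1)]
      have : s (j - 1) (j - 1) = j - 1 + 1 := Equiv.swap_apply_left _ _
      rw [this, hj]
    · rw [sji_nil (by omega)]; rfl

lemma normalWord_succ (m : ℕ) (f : ℕ → ℕ) :
    normalWord (m + 1) f = normalWord m f ++ sji (m + 1) (f (m + 1)) := by
  unfold normalWord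
  rw [List.range_succ, List.map_append, List.flatten_append]
  simp

lemma mem_normalWord_lt {n : ℕ} {f : ℕ → ℕ} {a : ℕ} (h : a ∈ normalWord n f) :
    a + 1 ≤ n := by
  unfold normalWord at h
  rw [List.mem_flatten] at h
  obtain ⟨l, hl, ha⟩ := h
  rw [List.mem_map] at hl
  obtain ⟨k, hk, rfl⟩ := hl
  rw [List.mem_range] at hk
  have := mem_sji ha
  omega

lemma wperm_normalWord_fix {m : ℕ} {f : ℕ → ℕ} {p : ℕ} (hp : m + 1 ≤ p) :
    wperm (normalWord m f) p = p :=
  wperm_fix (fun a ha => by have := mem_normalWord_lt ha; omega)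

lemma wperm_normalWord_inv_fix {m : ℕ} {f : ℕ → ℕ} {p : ℕ} (hp : m + 1 ≤ p) :
    (wperm (normalWord m f))⁻¹ p = p := by
  have h := wperm_normalWord_fix (f := f) hp
  calc (wperm (normalWord m f))⁻¹ p = (wperm (normalWord m f))⁻¹ (wperm (normalWord m f) p) := by
        rw [h]
    _ = p := Equiv.symm_apply_apply _ _

lemma wperm_normalWord_inv_le {m : ℕ} {f : ℕ → ℕ} {a : ℕ} (ha : a ≤ m) :
    (wperm (normalWord m f))⁻¹ a ≤ m := by
  by_contra hc
  push_neg at hc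
  have := wperm_normalWord_fix (f := f) (p := (wperm (normalWord m f))⁻¹ a) hc
  rw [← Equiv.Perm.mul_apply, mul_inv_cancel, Equiv.Perm.one_apply] at this
  omega

lemma names_normalWord (f : ℕ → ℕ) (m : ℕ) :
    (∀ N ∈ names (normalWord m f), ∀ x ∈ N, x ≤ m) ∧
    (∀ N : Finset ℕ, (names (normalWord m f)).count N ≤ 1) := by
  induction m with
  | zero =>
    have : normalWord 0 f = [] := by simp [normalWord]
    simp [this, names, namesAux]
  | succ m ih =>
    set π := wperm (normalWord m f) with hπ
    have hsplit : names (normalWord (m + 1) f)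
        = names (normalWord m f) ++ namesAux π (sji (m + 1) (f (m + 1))) := by
      rw [normalWord_succ, names, namesAux_append, mul_one]; rfl
    have hnew : namesAux π (sji (m + 1) (f (m + 1)))
        = (sji (m + 1) (f (m + 1))).map (fun a => ({π⁻¹ a, m + 1} : Finset ℕ)) := by
      rw [namesAux_sji]
      refine List.map_congr_left ?_
      intro a _
      rw [wperm_normalWord_inv_fix (le_refl _)]
    -- every new name contains m+1 and its elements are ≤ m+1
    have hnewmem : ∀ N ∈ namesAux π (sji (m + 1) (f (m + 1))),
        (m + 1) ∈ N ∧ ∀ x ∈ N, x ≤ m + 1 := by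
      rw [hnew]
      intro N hN
      rw [List.mem_map] at hN
      obtain ⟨a, ha, rfl⟩ := hN
      have ha1 : a ≤ m := by have := mem_sji ha; omega
      have ha2 : π⁻¹ a ≤ m := wperm_normalWord_inv_le ha1
      refine ⟨by simp, ?_⟩
      intro x hx
      simp only [Finset.mem_insert, Finset.mem_singleton] at hx
      rcases hx with rfl | rfl <;> omega
    have hnewnodup : (namesAux π (sji (m + 1) (f (m + 1)))).Nodup := by
      rw [hnew]
      refine List.Nodup.map_on ?_ (sji_nodup _ _)
      intro a ha b hb hab
      have ha1 : π⁻¹ a ≤ m := wperm_normalWord_inv_le (by have := mem_sji ha; omega)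
      have hmem : π⁻¹ a ∈ ({π⁻¹ b, m + 1} : Finset ℕ) := by
        rw [← hab]; simp
      simp only [Finset.mem_insert, Finset.mem_singleton] at hmem
      have : π⁻¹ a = π⁻¹ b := by omega
      exact π⁻¹.injective this
    have hdisj : ∀ N ∈ names (normalWord m f),
        N ∉ namesAux π (sji (m + 1) (f (m + 1))) := by
      intro N hN hN'
      have h1 := ih.1 N hN
      have h2 := (hnewmem N hN').1
      have := h1 _ h2
      omega
    constructor
    · intro N hN x hx
      rw [hsplit, List.mem_append] at hN
      rcases hN with hN | hN
      · have := ih.1 N hN x hx; omega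
      · exact (hnewmem N hN).2 x hx
    · intro N
      rw [hsplit, List.count_append]
      by_cases hmem : N ∈ names (normalWord m f)
      · have h0 : (namesAux π (sji (m + 1) (f (m + 1)))).count N = 0 :=
          List.count_eq_zero.mpr (hdisj N hmem)
        have := ih.2 N
        omega
      · have h0 : (names (normalWord m f)).count N = 0 := List.count_eq_zero.mpr hmem
        have h1 := List.nodup_iff_count_le_one.mp hnewnodup N
        omega

/-- `area(u) ≤ (n-1)·length(u)` for every `n`-expression; in the diagram of a normal
expression the `n`-th strand stays at position `n` until the final block `s_{n,f(n)}`,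
and any two strands cross at most once. -/
theorem area_bound_and_normal_diagram (n : ℕ) :
    (∀ u : List ℕ, IsExpr n u → area n u ≤ (n - 1) * u.length) ∧
    ∀ f : ℕ → ℕ, IsNormalFun n f →
      (∀ k, k ≤ (normalWord n f).length - (n - f n) →
        strandPos (normalWord n f) n k = n) ∧
      (∀ a : Finset ℕ, (names (normalWord n f)).count a ≤ 1) := by
  constructor
  · -- area bound
    intro u hu
    unfold area
    have hb : ∀ x ∈ (List.range u.length).map
        (fun k => n - max (strandPos u n k) (strandPos u n (k + 1))), x ≤ n - 1 := by
      intro x hx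
      rw [List.mem_map] at hx
      obtain ⟨k, hk, rfl⟩ := hx
      rcases Nat.eq_zero_or_pos n with h0 | h1
      · omega
      · have hpos : 1 ≤ strandPos u n k := by
          unfold strandPos
          by_contra hc
          push_neg at hc
          interval_cases h : (wperm (u.take k)) n
          have h0 : wperm (u.take k) 0 = 0 := by
            refine wperm_fix ?_
            intro a ha
            have := (hu a (List.mem_of_mem_take ha)).1
            omega
          have := (wperm (u.take k)).injective (h.trans h0.symm)
          omega
        have : n - max (strandPos u n k) (strandPos u n (k + 1)) ≤ n - strandPos u n k :=
          Nat.sub_le_sub_left (le_max_left _ _) n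
        omega
    calc ((List.range u.length).map
        (fun k => n - max (strandPos u n k) (strandPos u n (k + 1)))).sum
        ≤ ((List.range u.length).map
            (fun k => n - max (strandPos u n k) (strandPos u n (k + 1)))).length • (n - 1) :=
          List.sum_le_card_nsmul _ _ hb
      _ = (n - 1) * u.length := by simp [mul_comm]
  · intro f _hf
    constructor
    · -- the n-th strand stays at position n before the last block
      intro k hk
      unfold strandPos
      refine wperm_fix ?_
      intro a ha
      rcases Nat.eq_zero_or_pos n with h0 | h1
      · subst h0
        have : normalWord 0 f = [] := by simp [normalWord]
        rw [this] at ha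
        simp at ha
      · have hsplit : normalWord n f = normalWord (n - 1) f ++ sji n (f n) := by
          have := normalWord_succ (n - 1) f
          rwa [Nat.sub_add_cancel h1] at this
        have hlen : (normalWord n f).length
            = (normalWord (n - 1) f).length + (n - f n) := by
          rw [hsplit, List.length_append, length_sji]
        have hk' : k ≤ (normalWord (n - 1) f).length := by omega
        rw [hsplit, List.take_append_of_le_length hk'] at ha
        have := mem_normalWord_lt (List.mem_of_mem_take ha)
        omega
    · exact (names_normalWord f n).2

end
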